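/- Let R be a p-adic ring and W(R) its Witt vectors with Frobenius f, Verschiebung v, and I_R = v(W(R)). Let (M, F) be a 1-display over the Witt frame with normal decomposition L = L_0 ⊕ L_1 (finite projective W(R)-modules) and Φ = F|_L a f-linear map whose linearization Φ^♯ : L^f → L is bijective. Set P_0 = L_0 ⊕ L_1, P_1 = I_R L_0 ⊕ L_1, F_0 = F|_{P_0} and F_1 the induced f-linear map P_1 → P_0. Then (P_0, P_1, F_0, F_1) is a Zink display: (i) I_R P_0 ⊆ P_1 ⊆ P_0 with finite projective graded quotients P_0/P_1 ≅ L_0 ⊗_{W(R)} R and P_1/I_R P_0 ≅ L_1 ⊗_{W(R)} R; (ii) F_1 is an f-linear epimorphism; (iii) F_1(v(ξ)·x) = ξ·F_0(x) for all ξ ∈ W(R), x ∈ P_0. -/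

import Mathlib

open WittVector

theorem aux_mem_ker {p : ℕ} [Fact p.Prime] {R : Type} [CommRing R]
    (x : WittVector p R) :
    x ∈ RingHom.ker (constantCoeff (p := p) (R := R)) ↔ ∃ y, verschiebung y = x := by
  constructor
  · intro hx
    refine ⟨WittVector.mk p (fun n => x.coeff (n+1)), ?_⟩
    ext n
    cases n with
    | zero =>
      rw [verschiebung_coeff_zero]
      have := RingHom.mem_ker.1 hx
      simpa [WittVector.constantCoeff_apply] using this.symm
    | succ n => rw [verschiebung_coeff_succ]; rfl
  · rintro ⟨y, rfl⟩
    simp [RingHom.mem_ker, WittVector.constantCoeff_apply, verschiebung_coeff_zero]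


/-- `W(R)` regarded as an algebra over itself via the Witt vector Frobenius. -/
def FrobBase (p : ℕ) (R : Type) [CommRing R] [Fact p.Prime] := WittVector p R

noncomputable instance (p : ℕ) (R : Type) [CommRing R] [Fact p.Prime] :
    CommRing (FrobBase p R) := inferInstanceAs (CommRing (WittVector p R))

/-- The Frobenius `f : W(R) → W(R)`, regarded as a ring map into `FrobBase p R`. -/
noncomputable def frobTo (p : ℕ) (R : Type) [CommRing R] [Fact p.Prime] :
    WittVector p R →+* FrobBase p R := WittVector.frobenius

noncomputable instance (p : ℕ) (R : Type) [CommRing R] [Fact p.Prime] :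
    Algebra (WittVector p R) (FrobBase p R) := (frobTo p R).toAlgebra

/-- An additive `f`-semilinear map `Φ : L → L'` of `W(R)`-modules is an `f`-linear
bijection if its linearization `Φ^♯ : L^f = W(R) ⊗_{W(R),f} L → L'` is bijective,
i.e. there is an additive isomorphism `e : L^f ≃ L'` with `e (a ⊗ x) = a • Φ x`. -/
def IsFLinearBij (p : ℕ) (R : Type) [CommRing R] [Fact p.Prime]
    {L L' : Type} [AddCommGroup L] [AddCommGroup L']
    [Module (WittVector p R) L] [Module (WittVector p R) L']
    (Φ : L →+ L') : Prop :=
  ∃ e : TensorProduct (WittVector p R) (FrobBase p R) L ≃+ L',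
    ∀ (a : FrobBase p R) (x : L),
      e (TensorProduct.tmul _ a x) = (show WittVector p R from a) • Φ x


theorem frobBase_smul (p : ℕ) (R : Type) [CommRing R] [Fact p.Prime]
    (w : WittVector p R) (a : FrobBase p R) :
    w • a = (show FrobBase p R from
      (frobenius w * (show WittVector p R from a) : WittVector p R)) := by
  rw [Algebra.smul_def]; rfl

noncomputable def vLin (p : ℕ) (R : Type) [CommRing R] [Fact p.Prime] :
    FrobBase p R →ₗ[WittVector p R] WittVector p R where
  toFun ξ := verschiebung (show WittVector p R from ξ)
  map_add' x y := map_add (verschiebung (p := p) (R := R)) _ _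
  map_smul' w ξ := by
    simp only [RingHom.id_apply]
    rw [frobBase_smul]
    show verschiebung (frobenius w * (show WittVector p R from ξ)) = _
    rw [mul_comm, verschiebung_mul_frobenius, smul_eq_mul, mul_comm]

theorem vLin_injective (p : ℕ) (R : Type) [CommRing R] [Fact p.Prime] :
    Function.Injective (vLin p R) := by
  intro x y h
  refine WittVector.ext (fun n => ?_)
  have := congrArg (fun z => WittVector.coeff z (n+1)) h
  exact (verschiebung_coeff_succ x n).symm.trans (this.trans (verschiebung_coeff_succ y n))

open TensorProduct in
noncomputable def Tmap (p : ℕ) (R : Type) [CommRing R] [Fact p.Prime]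
    (L : Type) [AddCommGroup L] [Module (WittVector p R) L] :
    TensorProduct (WittVector p R) (FrobBase p R) L →ₗ[WittVector p R] L :=
  (TensorProduct.lid (WittVector p R) L).toLinearMap ∘ₗ (vLin p R).rTensor L

theorem Tmap_tmul (p : ℕ) (R : Type) [CommRing R] [Fact p.Prime]
    (L : Type) [AddCommGroup L] [Module (WittVector p R) L]
    (ξ : FrobBase p R) (y : L) :
    Tmap p R L (ξ ⊗ₜ y) = (verschiebung (show WittVector p R from ξ)) • y := by
  simp [Tmap, vLin]
  rfl

theorem Tmap_injective (p : ℕ) (R : Type) [CommRing R] [Fact p.Prime]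
    (L : Type) [AddCommGroup L] [Module (WittVector p R) L]
    [Module.Projective (WittVector p R) L] :
    Function.Injective (Tmap p R L) := by
  have h1 : Function.Injective ((vLin p R).rTensor L) :=
    Module.Flat.rTensor_preserves_injective_linearMap (vLin p R) (vLin_injective p R)
  exact (TensorProduct.lid (WittVector p R) L).injective.comp h1

theorem Tmap_range (p : ℕ) (R : Type) [CommRing R] [Fact p.Prime]
    (L : Type) [AddCommGroup L] [Module (WittVector p R) L] :
    LinearMap.range (Tmap p R L)
      = (RingHom.ker (constantCoeff (p := p) (R := R))) • (⊤ : Submodule (WittVector p R) L) := by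
  apply le_antisymm
  · rintro x ⟨t, rfl⟩
    induction t using TensorProduct.induction_on with
    | zero => simp
    | tmul ξ y =>
      rw [Tmap_tmul]
      exact Submodule.smul_mem_smul
        ((aux_mem_ker _).2 ⟨_, rfl⟩) trivial
    | add a b ha hb => rw [map_add]; exact Submodule.add_mem _ ha hb
  · refine Submodule.smul_le.2 (fun r hr y _ => ?_)
    obtain ⟨ξ, rfl⟩ := (aux_mem_ker r).1 hr
    exact ⟨(show FrobBase p R from ξ) ⊗ₜ y, Tmap_tmul p R L ξ y⟩

theorem quot_smul_eq {R : Type} [CommRing R] (I : Ideal R) {A : Type} [AddCommGroup A]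
    [Module R A] [Module (R ⧸ I) A] [IsScalarTower R (R ⧸ I) A] (r : R) (x : A) :
    (Ideal.Quotient.mk I r) • x = r • x := by
  have h1 : (Ideal.Quotient.mk I r) = r • (1 : R ⧸ I) := by
    rw [Algebra.smul_def, mul_one, Ideal.Quotient.algebraMap_eq]
  rw [h1, smul_assoc, one_smul]

/-- upgrade an `R`-linear equiv between `R⧸I`-modules to an `R⧸I`-linear equiv -/
noncomputable def quotLinearEquiv {R : Type} [CommRing R] (I : Ideal R) {A B : Type}
    [AddCommGroup A] [AddCommGroup B] [Module R A] [Module R B]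
    [Module (R ⧸ I) A] [Module (R ⧸ I) B]
    [IsScalarTower R (R ⧸ I) A] [IsScalarTower R (R ⧸ I) B]
    (e : A ≃ₗ[R] B) : A ≃ₗ[R ⧸ I] B :=
  { e.toAddEquiv with
    map_smul' := by
      intro c x
      obtain ⟨r, rfl⟩ := Ideal.Quotient.mk_surjective c
      show e ((Ideal.Quotient.mk I r) • x) = (Ideal.Quotient.mk I r) • e x
      rw [quot_smul_eq, quot_smul_eq, map_smul] }

theorem finite_quot_smul {R : Type} [CommRing R] (I : Ideal R) {M : Type} [AddCommGroup M]
    [Module R M] [Module.Finite R M] :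
    Module.Finite (R ⧸ I) (M ⧸ (I • (⊤ : Submodule R M))) := by
  haveI : IsScalarTower R (R ⧸ I) (M ⧸ (I • (⊤ : Submodule R M))) :=
    Module.IsTorsionBySet.isScalarTower _
  haveI : Module.Finite R (M ⧸ (I • (⊤ : Submodule R M))) :=
    Module.Finite.of_surjective (Submodule.mkQ _) (Submodule.mkQ_surjective _)
  exact Module.Finite.of_restrictScalars_finite R _ _

theorem projective_quot_smul {R : Type} [CommRing R] (I : Ideal R) {M : Type} [AddCommGroup M]
    [Module R M] [Module.Projective R M] :
    Module.Projective (R ⧸ I) (M ⧸ (I • (⊤ : Submodule R M))) := by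
  haveI : IsScalarTower R (R ⧸ I) (M ⧸ (I • (⊤ : Submodule R M))) :=
    Module.IsTorsionBySet.isScalarTower _
  haveI : Module.Projective (R ⧸ I) (TensorProduct R (R ⧸ I) M) := inferInstance
  exact Module.Projective.of_equiv
    (quotLinearEquiv I (TensorProduct.quotTensorEquivQuotSMul M I))

open TensorProduct

variable (p : ℕ) [Fact p.Prime] (R : Type) [CommRing R]
variable (L₀ L₁ : Type) [AddCommGroup L₀] [AddCommGroup L₁]
variable [Module (WittVector p R) L₀] [Module (WittVector p R) L₁]

/-- `Teq : L₀^f ≃ I_R L₀`, the linearization of `ξ ⊗ y ↦ v(ξ) y`. -/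
noncomputable def Teq [Module.Projective (WittVector p R) L₀] :
    TensorProduct (WittVector p R) (FrobBase p R) L₀ ≃ₗ[WittVector p R]
      ((RingHom.ker (constantCoeff (p := p) (R := R))) •
        (⊤ : Submodule (WittVector p R) L₀) : Submodule (WittVector p R) L₀) :=
  (LinearEquiv.ofInjective (Tmap p R L₀) (Tmap_injective p R L₀)).trans
    (LinearEquiv.ofEq _ _ (Tmap_range p R L₀))

theorem Teq_symm [Module.Projective (WittVector p R) L₀]
    (ξ : FrobBase p R) (y : L₀)
    (h : verschiebung (show WittVector p R from ξ) • y ∈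
      (RingHom.ker (constantCoeff (p := p) (R := R))) • (⊤ : Submodule (WittVector p R) L₀)) :
    (Teq p R L₀).symm ⟨verschiebung (show WittVector p R from ξ) • y, h⟩ = ξ ⊗ₜ y := by
  rw [LinearEquiv.symm_apply_eq]
  apply Subtype.ext
  show _ = Tmap p R L₀ (ξ ⊗ₜ y)
  rw [Tmap_tmul]

variable {p R L₀ L₁} in
/-- The underlying function of `F₁`. -/
noncomputable def F1fun [Module.Projective (WittVector p R) L₀]
    (e : TensorProduct (WittVector p R) (FrobBase p R) (L₀ × L₁) ≃+ (L₀ × L₁))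
    (x : (((RingHom.ker (constantCoeff (p := p) (R := R))) •
        (⊤ : Submodule (WittVector p R) L₀)).prod
        (⊤ : Submodule (WittVector p R) L₁) : Submodule (WittVector p R) (L₀ × L₁))) :
    L₀ × L₁ :=
  e ((LinearMap.inl (WittVector p R) L₀ L₁).lTensor (FrobBase p R)
      ((Teq p R L₀).symm ⟨x.1.1, (Submodule.mem_prod.1 x.2).1⟩)
    + (1 : FrobBase p R) ⊗ₜ[WittVector p R] ((0 : L₀), x.1.2))

variable {p R L₀ L₁}

theorem F1fun_val [Module.Projective (WittVector p R) L₀]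
    (e : TensorProduct (WittVector p R) (FrobBase p R) (L₀ × L₁) ≃+ (L₀ × L₁))
    (ξ : WittVector p R) (x₀ : L₀) (x₁ : L₁)
    (h : (((verschiebung ξ : WittVector p R) • x₀, x₁) : L₀ × L₁) ∈
      (((RingHom.ker (constantCoeff (p := p) (R := R))) •
        (⊤ : Submodule (WittVector p R) L₀)).prod (⊤ : Submodule (WittVector p R) L₁))) :
    F1fun e ⟨((verschiebung ξ : WittVector p R) • x₀, x₁), h⟩ =
      e ((show FrobBase p R from ξ) ⊗ₜ[WittVector p R] ((x₀, 0) : L₀ × L₁)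
        + (1 : FrobBase p R) ⊗ₜ[WittVector p R] (((0 : L₀), x₁) : L₀ × L₁)) := by
  unfold F1fun
  congr 1
  congr 1
  rw [Teq_symm p R L₀ (show FrobBase p R from ξ) x₀]
  simp
  rfl

theorem F1fun_add [Module.Projective (WittVector p R) L₀]
    (e : TensorProduct (WittVector p R) (FrobBase p R) (L₀ × L₁) ≃+ (L₀ × L₁))
    (x y : (((RingHom.ker (constantCoeff (p := p) (R := R))) •
        (⊤ : Submodule (WittVector p R) L₀)).prod
        (⊤ : Submodule (WittVector p R) L₁) : Submodule (WittVector p R) (L₀ × L₁)))  :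
    F1fun e (x + y) = F1fun e x + F1fun e y := by
  unfold F1fun
  rw [← map_add]
  congr 1
  have h1 : (⟨(x + y).1.1, (Submodule.mem_prod.1 (x + y).2).1⟩ :
      ↥((RingHom.ker (constantCoeff (p := p) (R := R))) • (⊤ : Submodule (WittVector p R) L₀)))
      = ⟨x.1.1, (Submodule.mem_prod.1 x.2).1⟩ + ⟨y.1.1, (Submodule.mem_prod.1 y.2).1⟩ :=
    Subtype.ext rfl
  have h2 : (((0 : L₀), (x + y).1.2) : L₀ × L₁) = ((0 : L₀), x.1.2) + ((0 : L₀), y.1.2) := by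
    simp
  rw [h1, map_add, map_add, h2, TensorProduct.tmul_add]
  abel

theorem e_smul (Φ : (L₀ × L₁) →+ (L₀ × L₁))
    (e : TensorProduct (WittVector p R) (FrobBase p R) (L₀ × L₁) ≃+ (L₀ × L₁))
    (he : ∀ (a : FrobBase p R) (x : L₀ × L₁),
      e (TensorProduct.tmul _ a x) = (show WittVector p R from a) • Φ x)
    (w : WittVector p R) (t : TensorProduct (WittVector p R) (FrobBase p R) (L₀ × L₁)) :
    e (w • t) = frobenius w • e t := by
  induction t using TensorProduct.induction_on with
  | zero => simp
  | tmul a x =>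
    rw [TensorProduct.smul_tmul', he, he]
    have : (show WittVector p R from w • a)
        = frobenius w * (show WittVector p R from a) := by
      rw [frobBase_smul]
    rw [this, mul_smul]
  | add a b ha hb => rw [smul_add, map_add, map_add, ha, hb, smul_add]

theorem F1fun_smul [Module.Projective (WittVector p R) L₀]
    (Φ : (L₀ × L₁) →+ (L₀ × L₁))
    (e : TensorProduct (WittVector p R) (FrobBase p R) (L₀ × L₁) ≃+ (L₀ × L₁))
    (he : ∀ (a : FrobBase p R) (x : L₀ × L₁),
      e (TensorProduct.tmul _ a x) = (show WittVector p R from a) • Φ x)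
    (w : WittVector p R)
    (x : (((RingHom.ker (constantCoeff (p := p) (R := R))) •
        (⊤ : Submodule (WittVector p R) L₀)).prod
        (⊤ : Submodule (WittVector p R) L₁) : Submodule (WittVector p R) (L₀ × L₁)))  :
    F1fun e (w • x) = frobenius w • F1fun e x := by
  unfold F1fun
  rw [← e_smul Φ e he]
  congr 1
  have h1 : (⟨(w • x).1.1, (Submodule.mem_prod.1 (w • x).2).1⟩ :
      ↥((RingHom.ker (constantCoeff (p := p) (R := R))) • (⊤ : Submodule (WittVector p R) L₀)))
      = w • ⟨x.1.1, (Submodule.mem_prod.1 x.2).1⟩ :=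
    Subtype.ext rfl
  have h2 : (((0 : L₀), (w • x).1.2) : L₀ × L₁) = w • ((0 : L₀), x.1.2) := by
    show _ = (w • (0:L₀), w • x.1.2)
    rw [smul_zero]
    rfl
  rw [h1, map_smul, map_smul, h2, TensorProduct.tmul_smul, smul_add]

/-- Let `R` be a `p`-adic ring, `(M, F)` a `1`-display over the Witt frame
given by a normal decomposition `L = L₀ ⊕ L₁` (finite projective `W(R)`-modules) and an
`f`-linear map `Φ = F|_L` whose linearization is bijective.  Set `P₀ = L₀ ⊕ L₁`,
`P₁ = I_R L₀ ⊕ L₁`, `F₀(x₀ + x₁) = Φ(x₀) + pΦ(x₁)` and let `F₁` be the induced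
`f`-linear map `P₁ → P₀` with `F₁(v(ξ)x₀ + x₁) = ξΦ(x₀) + Φ(x₁)`.  Then
`(P₀, P₁, F₀, F₁)` is a Zink display:
(i) `I_R P₀ ⊆ P₁ ⊆ P₀` with graded quotients `P₀/P₁ ≅ L₀ ⊗_{W(R)} R` and
    `P₁/I_R P₀ ≅ L₁ ⊗_{W(R)} R` finite projective over `R = W(R)/I_R`;
(ii) `F₁` is an `f`-linear epimorphism;
(iii) `F₁(v(ξ)·x) = ξ·F₀(x)` for all `ξ ∈ W(R)`, `x ∈ P₀`. -/
theorem stmt_14 (p : ℕ) [Fact p.Prime] (R : Type) [CommRing R]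
    (hR : IsAdicComplete (Ideal.span {(p : R)}) R)
    (L₀ L₁ : Type) [AddCommGroup L₀] [AddCommGroup L₁]
    [Module (WittVector p R) L₀] [Module (WittVector p R) L₁]
    [Module.Finite (WittVector p R) L₀] [Module.Projective (WittVector p R) L₀]
    [Module.Finite (WittVector p R) L₁] [Module.Projective (WittVector p R) L₁]
    (Φ : (L₀ × L₁) →+ (L₀ × L₁))
    (hΦsemi : ∀ (ξ : WittVector p R) (x : L₀ × L₁), Φ (ξ • x) = frobenius ξ • Φ x)
    (hΦbij : IsFLinearBij p R Φ)
    -- `I_R = ker w₀` and `P₁ = I_R L₀ ⊕ L₁ ⊆ P₀ = L₀ ⊕ L₁`: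
    (IR : Ideal (WittVector p R)) (hIR : IR = RingHom.ker (constantCoeff (p := p)))
    (P₁ : Submodule (WittVector p R) (L₀ × L₁))
    (hP₁ : P₁ = (IR • (⊤ : Submodule (WittVector p R) L₀)).prod ⊤) :
    -- (i) I_R P₀ ⊆ P₁, with finite projective graded quotients:
    (IR • (⊤ : Submodule (WittVector p R) (L₀ × L₁)) ≤ P₁) ∧
    Nonempty (((L₀ × L₁) ⧸ P₁) ≃ₗ[WittVector p R]
      (L₀ ⧸ (IR • (⊤ : Submodule (WittVector p R) L₀)))) ∧
    Nonempty ((P₁ ⧸ (Submodule.comap P₁.subtype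
        (IR • (⊤ : Submodule (WittVector p R) (L₀ × L₁))))) ≃ₗ[WittVector p R]
      (L₁ ⧸ (IR • (⊤ : Submodule (WittVector p R) L₁)))) ∧
    Module.Finite (WittVector p R ⧸ IR)
      (L₀ ⧸ (IR • (⊤ : Submodule (WittVector p R) L₀))) ∧
    Module.Projective (WittVector p R ⧸ IR)
      (L₀ ⧸ (IR • (⊤ : Submodule (WittVector p R) L₀))) ∧
    Module.Finite (WittVector p R ⧸ IR)
      (L₁ ⧸ (IR • (⊤ : Submodule (WittVector p R) L₁))) ∧
    Module.Projective (WittVector p R ⧸ IR)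
      (L₁ ⧸ (IR • (⊤ : Submodule (WittVector p R) L₁))) ∧
    -- (ii), (iii): existence of the induced F₁, an f-linear epimorphism satisfying
    -- the Zink display axioms with respect to F₀(x) = Φ(x₀,0) + p Φ(0,x₁):
    ∃ F₁ : P₁ →+ (L₀ × L₁),
      (∀ (ξ : WittVector p R) (x : P₁), F₁ (ξ • x) = frobenius ξ • F₁ x) ∧
      (∀ (ξ : WittVector p R) (x₀ : L₀) (x₁ : L₁)
        (hmem : ((verschiebung ξ : WittVector p R) • x₀, x₁) ∈ P₁),
        F₁ ⟨((verschiebung ξ : WittVector p R) • x₀, x₁), hmem⟩ =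
          ξ • Φ (x₀, 0) + Φ (0, x₁)) ∧
      Submodule.span (WittVector p R) (Set.range F₁) = ⊤ ∧
      (∀ (ξ : WittVector p R) (x : L₀ × L₁)
        (hmem : (verschiebung ξ : WittVector p R) • x ∈ P₁),
        F₁ ⟨(verschiebung ξ : WittVector p R) • x, hmem⟩ =
          ξ • (Φ (x.1, 0) + (p : WittVector p R) • Φ (0, x.2))) := by
  subst hP₁
  subst hIR
  obtain ⟨e, he⟩ := hΦbij
  have hone : (show WittVector p R from (1 : FrobBase p R)) = 1 := rfl
  -- (i) part 1
  have part1 : (RingHom.ker (constantCoeff (p := p) (R := R))) •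
      (⊤ : Submodule (WittVector p R) (L₀ × L₁)) ≤
      ((RingHom.ker (constantCoeff (p := p) (R := R))) •
        (⊤ : Submodule (WittVector p R) L₀)).prod ⊤ :=
    Submodule.smul_le.2 fun r hr m _ =>
      Submodule.mem_prod.2 ⟨Submodule.smul_mem_smul hr trivial, trivial⟩
  -- first quotient iso
  let φ : (L₀ × L₁) →ₗ[WittVector p R]
      (L₀ ⧸ ((RingHom.ker (constantCoeff (p := p) (R := R))) •
        (⊤ : Submodule (WittVector p R) L₀))) :=
    (Submodule.mkQ _) ∘ₗ (LinearMap.fst _ L₀ L₁)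
  have hkerφ : LinearMap.ker φ = ((RingHom.ker (constantCoeff (p := p) (R := R))) •
      (⊤ : Submodule (WittVector p R) L₀)).prod ⊤ := by
    ext x
    simp [φ, LinearMap.mem_ker, Submodule.Quotient.mk_eq_zero, Submodule.mem_prod]
  have hsurjφ : Function.Surjective φ := by
    intro y
    obtain ⟨a, rfl⟩ := Submodule.mkQ_surjective _ y
    exact ⟨(a, 0), rfl⟩
  -- product smul identity
  have hprodsmul : (RingHom.ker (constantCoeff (p := p) (R := R))) •
      (⊤ : Submodule (WittVector p R) (L₀ × L₁)) =
      ((RingHom.ker (constantCoeff (p := p) (R := R))) •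
        (⊤ : Submodule (WittVector p R) L₀)).prod
      ((RingHom.ker (constantCoeff (p := p) (R := R))) •
        (⊤ : Submodule (WittVector p R) L₁)) := by
    apply le_antisymm
    · exact Submodule.smul_le.2 fun r hr m _ => Submodule.mem_prod.2
        ⟨Submodule.smul_mem_smul hr trivial, Submodule.smul_mem_smul hr trivial⟩
    · rintro ⟨a, b⟩ h
      obtain ⟨ha, hb⟩ := Submodule.mem_prod.1 h
      have h1 : ((a, 0) : L₀ × L₁) ∈ (RingHom.ker (constantCoeff (p := p) (R := R))) •
          (⊤ : Submodule (WittVector p R) (L₀ × L₁)) := by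
        have := Submodule.mem_map_of_mem (f := LinearMap.inl (WittVector p R) L₀ L₁) ha
        rw [Submodule.map_smul''] at this
        exact (smul_mono_right _ le_top : _ ≤ (RingHom.ker (constantCoeff (p := p) (R := R))) •
          (⊤ : Submodule (WittVector p R) (L₀ × L₁))) this
      have h2 : ((0, b) : L₀ × L₁) ∈ (RingHom.ker (constantCoeff (p := p) (R := R))) •
          (⊤ : Submodule (WittVector p R) (L₀ × L₁)) := by
        have := Submodule.mem_map_of_mem (f := LinearMap.inr (WittVector p R) L₀ L₁) hb
        rw [Submodule.map_smul''] at this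
        exact (smul_mono_right _ le_top : _ ≤ (RingHom.ker (constantCoeff (p := p) (R := R))) •
          (⊤ : Submodule (WittVector p R) (L₀ × L₁))) this
      have : ((a, b) : L₀ × L₁) = (a, 0) + (0, b) := by simp
      rw [this]
      exact Submodule.add_mem _ h1 h2
  -- second quotient iso
  let P := ((RingHom.ker (constantCoeff (p := p) (R := R))) •
      (⊤ : Submodule (WittVector p R) L₀)).prod (⊤ : Submodule (WittVector p R) L₁)
  let ψ : P →ₗ[WittVector p R]
      (L₁ ⧸ ((RingHom.ker (constantCoeff (p := p) (R := R))) •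
        (⊤ : Submodule (WittVector p R) L₁))) :=
    (Submodule.mkQ _) ∘ₗ (LinearMap.snd _ L₀ L₁) ∘ₗ (Submodule.subtype P)
  have hkerψ : LinearMap.ker ψ = Submodule.comap P.subtype
      ((RingHom.ker (constantCoeff (p := p) (R := R))) •
        (⊤ : Submodule (WittVector p R) (L₀ × L₁))) := by
    ext x
    have hx1 : x.1.1 ∈ (RingHom.ker (constantCoeff (p := p) (R := R))) •
        (⊤ : Submodule (WittVector p R) L₀) := (Submodule.mem_prod.1 x.2).1
    simp only [LinearMap.mem_ker, Submodule.mem_comap, hprodsmul, ψ, LinearMap.coe_comp,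
      Function.comp_apply, Submodule.coe_subtype, LinearMap.snd_apply,
      Submodule.mkQ_apply, Submodule.Quotient.mk_eq_zero, Submodule.mem_prod]
    exact ⟨fun h => ⟨hx1, h⟩, fun h => h.2⟩
  have hsurjψ : Function.Surjective ψ := by
    intro y
    obtain ⟨b, rfl⟩ := Submodule.mkQ_surjective _ y
    exact ⟨⟨(0, b), Submodule.mem_prod.2 ⟨Submodule.zero_mem _, trivial⟩⟩, rfl⟩
  refine ⟨part1,
    ⟨(Submodule.quotEquivOfEq _ _ hkerφ.symm).trans (φ.quotKerEquivOfSurjective hsurjφ)⟩,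
    ⟨(Submodule.quotEquivOfEq _ _ hkerψ.symm).trans (ψ.quotKerEquivOfSurjective hsurjψ)⟩,
    finite_quot_smul _, projective_quot_smul _, finite_quot_smul _, projective_quot_smul _,
    ?_⟩
  -- the map F₁
  have hrange : ∀ (a : WittVector p R) (x₀ : L₀) (x₁ : L₁),
      a • Φ (x₀, 0) + Φ (0, x₁) ∈
        Set.range (AddMonoidHom.mk' (F1fun e) (F1fun_add e)) := by
    intro a x₀ x₁
    have hmem : (((verschiebung a : WittVector p R) • x₀, x₁) : L₀ × L₁) ∈
        ((RingHom.ker (constantCoeff (p := p) (R := R))) •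
          (⊤ : Submodule (WittVector p R) L₀)).prod ⊤ :=
      Submodule.mem_prod.2
        ⟨Submodule.smul_mem_smul ((aux_mem_ker _).2 ⟨a, rfl⟩) trivial, trivial⟩
    refine ⟨⟨_, hmem⟩, ?_⟩
    show F1fun e _ = _
    rw [F1fun_val e a x₀ x₁ hmem, map_add, he, he, hone, one_smul]
  refine ⟨AddMonoidHom.mk' (F1fun e) (F1fun_add e), fun w x => F1fun_smul Φ e he w x,
    ?_, ?_, ?_⟩
  · intro ξ x₀ x₁ hmem
    show F1fun e _ = _
    rw [F1fun_val e ξ x₀ x₁ hmem, map_add, he, he, hone, one_smul]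
  · rw [eq_top_iff]
    rintro y -
    obtain ⟨t, rfl⟩ := e.surjective y
    induction t using TensorProduct.induction_on with
    | zero => rw [map_zero]; exact zero_mem _
    | tmul a x =>
      rw [he]
      have hx : ((x.1, (0:L₁)) : L₀ × L₁) + ((0:L₀), x.2) = x := by simp
      rw [← hx, map_add, smul_add]
      refine add_mem ?_ ?_
      · have h := hrange (show WittVector p R from a) x.1 0
        rw [Prod.mk_zero_zero, map_zero, add_zero] at h
        exact Submodule.subset_span h
      · refine Submodule.smul_mem _ _ (Submodule.subset_span ?_)
        have h := hrange 0 0 x.2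
        rw [zero_smul, zero_add] at h
        exact h
    | add a b ha hb => rw [map_add]; exact add_mem ha hb
  · intro ξ x hmem
    show F1fun e _ = _
    have h1 : (⟨(verschiebung ξ : WittVector p R) • x, hmem⟩ :
        ↥(((RingHom.ker (constantCoeff (p := p) (R := R))) •
          (⊤ : Submodule (WittVector p R) L₀)).prod ⊤))
        = ⟨((verschiebung ξ : WittVector p R) • x.1,
            (verschiebung ξ : WittVector p R) • x.2), hmem⟩ := rfl
    rw [h1, F1fun_val e ξ x.1 ((verschiebung ξ : WittVector p R) • x.2) hmem,
      map_add, he, he, hone, one_smul]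
    have h2 : (((0:L₀), (verschiebung ξ : WittVector p R) • x.2) : L₀ × L₁)
        = (verschiebung ξ : WittVector p R) • ((0:L₀), x.2) := by
      show _ = ((verschiebung ξ : WittVector p R) • (0:L₀), _)
      rw [smul_zero]
    rw [h2, hΦsemi, frobenius_verschiebung, smul_add, mul_smul]
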